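/- For all integers k ≥ 1 and n > ℓ, if k_n = k then n ≤ (ℓ+1)k + ℓ − 1. (Equivalently, the largest n with k_n = k is at most (ℓ+1)k + ℓ − 1.) -/
import Mathlib


/-- The pattern 1(ℓ+1)ℓ⋯2 written 0-indexed: position 0 holds the smallest
value, and the values strictly decrease over positions 1,…,ℓ. -/
def patn (l : ℕ) : Fin (l+1) → ℕ := fun i => if i = 0 then 0 else l + 1 - (i : ℕ)

/-- The number of copies of the pattern 1(ℓ+1)ℓ⋯2 in the permutation `p` of
`{0,…,n-1}`: the number of strictly increasing index sequences along which the
values of `p` are ordered like the pattern. -/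
noncomputable def copies (l n : ℕ) (p : Equiv.Perm (Fin n)) : ℕ :=
  Set.ncard {f : Fin (l+1) → Fin n | StrictMono f ∧
    ∀ a b : Fin (l+1), patn l a < patn l b ↔ p (f a) < p (f b)}

/-- `M l n` is the maximum number of copies of the pattern 1(ℓ+1)ℓ⋯2 over all
permutations of an `n`-element set (and `M l 0 = 0`). -/
noncomputable def M (l n : ℕ) : ℕ :=
  sSup {m | ∃ p : Equiv.Perm (Fin n), copies l n p = m}

/-- `kn l n` is the largest `k` with `1 ≤ k < n` maximizing
`M l k + k * C(n-k, l)`. -/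
noncomputable def kn (l n : ℕ) : ℕ :=
  sSup {k | 1 ≤ k ∧ k < n ∧ ∀ j : ℕ, 1 ≤ j → j < n →
    M l j + j * Nat.choose (n - j) l ≤ M l k + k * Nat.choose (n - k) l}

lemma copies_le (l n : ℕ) (p : Equiv.Perm (Fin n)) :
    copies l n p ≤ Fintype.card (Fin (l+1) → Fin n) := by
  rw [← Nat.card_eq_fintype_card, ← Set.ncard_univ]
  exact Set.ncard_le_ncard (Set.subset_univ _) (Set.toFinite _)

lemma Mset_bdd (l n : ℕ) :
    BddAbove {m | ∃ p : Equiv.Perm (Fin n), copies l n p = m} :=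
  ⟨Fintype.card (Fin (l+1) → Fin n), by rintro m ⟨p, rfl⟩; exact copies_le l n p⟩

lemma copies_le_M (l n : ℕ) (p : Equiv.Perm (Fin n)) : copies l n p ≤ M l n :=
  le_csSup (Mset_bdd l n) ⟨p, rfl⟩

lemma M_exists (l n : ℕ) : ∃ p : Equiv.Perm (Fin n), copies l n p = M l n := by
  have hmem : copies l n 1 ∈ {m | ∃ p : Equiv.Perm (Fin n), copies l n p = m} := ⟨1, rfl⟩
  exact Nat.sSup_mem ⟨_, hmem⟩ (Mset_bdd l n)

lemma M_mono_succ (l k : ℕ) : M l k ≤ M l (k + 1) := by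
  obtain ⟨p, hp⟩ := M_exists l k
  let p' : Equiv.Perm (Fin (k+1)) := Equiv.permCongr finSuccEquivLast.symm p.optionCongr
  have hp' : ∀ i : Fin k, p' i.castSucc = (p i).castSucc := by
    intro i
    simp [p', Equiv.permCongr_apply]
  have hsub : (fun f => Fin.castSucc ∘ f) '' {f : Fin (l+1) → Fin k | StrictMono f ∧
      ∀ a b : Fin (l+1), patn l a < patn l b ↔ p (f a) < p (f b)} ⊆
      {f : Fin (l+1) → Fin (k+1) | StrictMono f ∧
      ∀ a b : Fin (l+1), patn l a < patn l b ↔ p' (f a) < p' (f b)} := by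
    rintro _ ⟨f, ⟨hmono, hpat⟩, rfl⟩
    refine ⟨fun a b hab => ?_, fun a b => ?_⟩
    · exact Fin.castSucc_lt_castSucc_iff.2 (hmono hab)
    · rw [hpat a b]
      simp only [Function.comp_apply, hp', Fin.castSucc_lt_castSucc_iff]
  have hinj : Function.Injective (fun f : Fin (l+1) → Fin k => Fin.castSucc ∘ f) := by
    intro f g hfg
    funext i
    exact Fin.castSucc_injective k (congrFun hfg i)
  calc M l k = copies l k p := hp.symm
    _ = ((fun f => Fin.castSucc ∘ f) '' {f : Fin (l+1) → Fin k | StrictMono f ∧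
        ∀ a b : Fin (l+1), patn l a < patn l b ↔ p (f a) < p (f b)}).ncard :=
      (Set.ncard_image_of_injective _ hinj).symm
    _ ≤ copies l (k+1) p' := Set.ncard_le_ncard hsub (Set.toFinite _)
    _ ≤ M l (k+1) := copies_le_M l (k+1) p'

lemma choose_step (l k m : ℕ) (hk : 1 ≤ k) (hl : 1 ≤ l) (hm : (k+1) * l ≤ m) :
    k * Nat.choose m l ≤ (k+1) * Nat.choose (m-1) l := by
  obtain ⟨l', rfl⟩ : ∃ l', l = l' + 1 := ⟨l - 1, by omega⟩
  have hml : l' + 2 ≤ m := by nlinarith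
  obtain ⟨m', rfl⟩ : ∃ m', m = m' + 1 := ⟨m - 1, by omega⟩
  simp only [Nat.add_sub_cancel]
  have hpascal : Nat.choose (m'+1) (l'+1) = Nat.choose m' l' + Nat.choose m' (l'+1) :=
    Nat.choose_succ_succ m' l'
  have hkey : k * Nat.choose m' l' ≤ Nat.choose m' (l'+1) := by
    have hid : Nat.choose m' (l'+1) * (l'+1) = Nat.choose m' l' * (m' - l') :=
      Nat.choose_succ_right_eq m' l'
    have hge : k * (l'+1) ≤ m' - l' := by
      have h1 : (k+1) * (l'+1) = k * (l'+1) + l' + 1 := by ring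
      omega
    have hmul : (l'+1) * (k * Nat.choose m' l') ≤ (l'+1) * Nat.choose m' (l'+1) := by
      calc (l'+1) * (k * Nat.choose m' l') = (k * (l'+1)) * Nat.choose m' l' := by ring
        _ ≤ (m' - l') * Nat.choose m' l' := Nat.mul_le_mul_right _ hge
        _ = (l'+1) * Nat.choose m' (l'+1) := by rw [mul_comm (l'+1) _, hid, mul_comm]
    exact Nat.le_of_mul_le_mul_left hmul (by omega)
  calc k * Nat.choose (m'+1) (l'+1)
      = k * Nat.choose m' l' + k * Nat.choose m' (l'+1) := by rw [hpascal]; ring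
    _ ≤ Nat.choose m' (l'+1) + k * Nat.choose m' (l'+1) := Nat.add_le_add_right hkey _
    _ = (k+1) * Nat.choose m' (l'+1) := by ring

theorem stmt7 (l : ℕ) (hl : 2 ≤ l) (k n : ℕ) (hk : 1 ≤ k) (hn : l < n)
    (h : kn l n = k) :
    n ≤ (l+1) * k + l - 1 := by
  by_contra hcon
  push_neg at hcon
  have hn2 : (l+1)*k + l ≤ n := by omega
  unfold kn at h
  set S := {k | 1 ≤ k ∧ k < n ∧ ∀ j : ℕ, 1 ≤ j → j < n →
    M l j + j * Nat.choose (n - j) l ≤ M l k + k * Nat.choose (n - k) l} with hS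
  have hbdd : BddAbove S := ⟨n, fun x hx => hx.2.1.le⟩
  have hne : S.Nonempty := by
    by_contra hemp
    rw [Set.not_nonempty_iff_eq_empty] at hemp
    rw [hemp] at h
    simp at h
    omega
  have hkS : k ∈ S := h ▸ Nat.sSup_mem hne hbdd
  have hkmax := hkS.2.2
  have hk1n : k + 1 < n := by
    have ht2 : (l+1)*k = l*k + k := by ring
    omega
  have hstep : M l k + k * Nat.choose (n-k) l ≤
      M l (k+1) + (k+1) * Nat.choose (n-(k+1)) l := by
    have h1 : M l k ≤ M l (k+1) := M_mono_succ l k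
    have h2 : k * Nat.choose (n-k) l ≤ (k+1) * Nat.choose ((n-k)-1) l :=
      choose_step l k (n-k) hk (by omega) (by
        have ht : (k+1)*l + k = (l+1)*k + l := by ring
        omega)
    have h3 : n - (k+1) = (n-k) - 1 := by omega
    rw [h3]
    exact Nat.add_le_add h1 h2
  have hk1S : k + 1 ∈ S :=
    ⟨by omega, hk1n, fun j hj1 hj2 => le_trans (hkmax j hj1 hj2) hstep⟩
  have : k + 1 ≤ sSup S := le_csSup hbdd hk1S
  omega
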